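/- Let K be a field and R = K[x1,…,x6]. Then the radical of the ideal of R generated by the three polynomials x3x5, x3x6 + x2x4, x4x6 + x2x5 equals the ideal generated by the five monomials x3x5, x3x6, x2x4, x4x6, x2x5. -/

import Mathlib

open MvPolynomial

open AddMonoidAlgebra

namespace RadAux

/-- Exponent vectors divisible by one of the five squarefree generators. -/
def P (m : Fin 6 →₀ ℕ) : Prop :=
  (0 < m 2 ∧ 0 < m 4) ∨ (0 < m 2 ∧ 0 < m 5) ∨ (0 < m 1 ∧ 0 < m 3) ∨
  (0 < m 3 ∧ 0 < m 5) ∨ (0 < m 1 ∧ 0 < m 4)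

lemma P_add_right {m m' : Fin 6 →₀ ℕ} (h : P m') : P (m + m') := by
  simp only [P, Finsupp.add_apply] at h ⊢; omega

lemma P_of_nsmul {m : Fin 6 →₀ ℕ} {n : ℕ} (_hn : n ≠ 0) (h : P (n • m)) : P m := by
  have key : ∀ i : Fin 6, 0 < (n • m) i → 0 < m i := by
    intro i hi
    simp only [Finsupp.smul_apply, smul_eq_mul] at hi
    rcases Nat.eq_zero_or_pos (m i) with h0 | h0
    · rw [h0, Nat.mul_zero] at hi; exact absurd hi (lt_irrefl 0)
    · exact h0
  simp only [P] at h ⊢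
  rcases h with ⟨h1,h2⟩|⟨h1,h2⟩|⟨h1,h2⟩|⟨h1,h2⟩|⟨h1,h2⟩
  · exact Or.inl ⟨key _ h1, key _ h2⟩
  · exact Or.inr (Or.inl ⟨key _ h1, key _ h2⟩)
  · exact Or.inr (Or.inr (Or.inl ⟨key _ h1, key _ h2⟩))
  · exact Or.inr (Or.inr (Or.inr (Or.inl ⟨key _ h1, key _ h2⟩)))
  · exact Or.inr (Or.inr (Or.inr (Or.inr ⟨key _ h1, key _ h2⟩)))

variable {K : Type*} [Field K]

/-- The monomial ideal as a set-defined ideal. -/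
def Jid (K : Type*) [Field K] : Ideal (MvPolynomial (Fin 6) K) where
  carrier := {f | ∀ m ∈ f.support, P m}
  add_mem' := by
    classical
    intro a b ha hb m hm
    rcases Finset.mem_union.mp (MvPolynomial.support_add hm) with h | h
    exacts [ha m h, hb m h]
  zero_mem' := by simp
  smul_mem' := by
    classical
    intro c f hf m hm
    rw [smul_eq_mul] at hm
    have := MvPolynomial.support_mul c f hm
    rcases Finset.mem_add.mp this with ⟨a, ha, b, hb, rfl⟩
    exact P_add_right (hf b hb)

lemma mem_Jid_iff {f : MvPolynomial (Fin 6) K} : f ∈ Jid K ↔ ∀ m ∈ f.support, P m := Iff.rfl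

lemma monomial_mem_Jid {m : Fin 6 →₀ ℕ} (c : K) (hm : P m) : monomial m c ∈ Jid K := by
  intro m' hm'
  have := MvPolynomial.support_monomial_subset hm'
  rw [Finset.mem_singleton] at this
  rwa [this]

lemma pair_le {i j : Fin 6} (hij : i ≠ j) {m : Fin 6 →₀ ℕ} (hi : 0 < m i) (hj : 0 < m j) :
    Finsupp.single i 1 + Finsupp.single j 1 ≤ m := by
  rw [Finsupp.le_def]
  intro k
  simp only [Finsupp.add_apply, Finsupp.single_apply]
  by_cases h1 : i = k
  · subst h1
    rw [if_pos rfl, if_neg (Ne.symm hij)]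
    omega
  · rw [if_neg h1]
    by_cases h2 : j = k
    · subst h2
      rw [if_pos rfl]
      omega
    · rw [if_neg h2]
      omega

lemma X_mul_X_eq (i j : Fin 6) :
    (X i * X j : MvPolynomial (Fin 6) K) =
      monomial (Finsupp.single i 1 + Finsupp.single j 1) 1 := by
  rw [MvPolynomial.X, MvPolynomial.X, MvPolynomial.monomial_mul, one_mul]

/-- The five-generator span. -/
noncomputable def Jspan (K : Type*) [Field K] : Ideal (MvPolynomial (Fin 6) K) :=
  Ideal.span ({X 2 * X 4, X 2 * X 5, X 1 * X 3, X 3 * X 5, X 1 * X 4} :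
    Set (MvPolynomial (Fin 6) K))

lemma monomial_mem_Jspan {m : Fin 6 →₀ ℕ} (c : K) (hm : P m) : monomial m c ∈ Jspan K := by
  have key : ∀ i j : Fin 6, i ≠ j → 0 < m i → 0 < m j →
      (X i * X j : MvPolynomial (Fin 6) K) ∈ Jspan K → monomial m c ∈ Jspan K := by
    intro i j hij hi hj hXX
    have hle := pair_le hij hi hj
    have : monomial m c =
        (X i * X j : MvPolynomial (Fin 6) K) *
          monomial (m - (Finsupp.single i 1 + Finsupp.single j 1)) c := by
      rw [X_mul_X_eq, MvPolynomial.monomial_mul, one_mul, add_tsub_cancel_of_le hle]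
    rw [this]
    exact Ideal.mul_mem_right _ _ hXX
  have hsub : ∀ x ∈ ({X 2 * X 4, X 2 * X 5, X 1 * X 3, X 3 * X 5, X 1 * X 4} :
      Set (MvPolynomial (Fin 6) K)), x ∈ Jspan K := fun x hx => Ideal.subset_span hx
  rcases hm with ⟨h1,h2⟩|⟨h1,h2⟩|⟨h1,h2⟩|⟨h1,h2⟩|⟨h1,h2⟩
  · exact key 2 4 (by decide) h1 h2 (hsub _ (by simp))
  · exact key 2 5 (by decide) h1 h2 (hsub _ (by simp))
  · exact key 1 3 (by decide) h1 h2 (hsub _ (by simp))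
  · exact key 3 5 (by decide) h1 h2 (hsub _ (by simp))
  · exact key 1 4 (by decide) h1 h2 (hsub _ (by simp))

lemma P_pair {i j : Fin 6} (h : P (Finsupp.single i 1 + Finsupp.single j 1)) :
    P (Finsupp.single i 1 + Finsupp.single j 1) := h

lemma Jid_eq_Jspan : Jid K = Jspan K := by
  apply le_antisymm
  · intro f hf
    rw [show f = ∑ v ∈ f.support, monomial v (MvPolynomial.coeff v f) from
      (MvPolynomial.support_sum_monomial_coeff f).symm]
    exact Ideal.sum_mem _ fun v hv => monomial_mem_Jspan _ (hf v hv)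
  · rw [Jspan, Ideal.span_le]
    intro x hx
    simp only [Set.mem_insert_iff, Set.mem_singleton_iff] at hx
    have key : ∀ i j : Fin 6, P (Finsupp.single i 1 + Finsupp.single j 1) →
        (X i * X j : MvPolynomial (Fin 6) K) ∈ Jid K := by
      intro i j hP
      rw [X_mul_X_eq]
      exact monomial_mem_Jid 1 hP
    rcases hx with rfl|rfl|rfl|rfl|rfl
    · exact key 2 4 (by simp [P, Finsupp.single_apply])
    · exact key 2 5 (by simp [P, Finsupp.single_apply])
    · exact key 1 3 (by simp [P, Finsupp.single_apply])
    · exact key 3 5 (by simp [P, Finsupp.single_apply])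
    · exact key 1 4 (by simp [P, Finsupp.single_apply])

lemma Jid_is_radical {f : MvPolynomial (Fin 6) K} {n : ℕ} (hf : f ^ n ∈ Jid K) :
    f ∈ Jid K := by
  classical
  set h : MvPolynomial (Fin 6) K :=
    ∑ m ∈ f.support.filter (fun m => ¬ P m), monomial m (MvPolynomial.coeff m f) with hh_def
  have hsplit : f =
      (∑ m ∈ f.support.filter (fun m => P m), monomial m (MvPolynomial.coeff m f)) + h := by
    rw [hh_def, Finset.sum_filter_add_sum_filter_not]
    exact (MvPolynomial.support_sum_monomial_coeff f).symm
  have hfh : f - h ∈ Jid K := by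
    have hg : f - h =
        ∑ m ∈ f.support.filter (fun m => P m), monomial m (MvPolynomial.coeff m f) := by
      conv_lhs => rw [hsplit]
      ring
    rw [hg]
    exact Ideal.sum_mem _ fun m hm => monomial_mem_Jid _ (Finset.mem_filter.mp hm).2
  have hhn : h ^ n ∈ Jid K := by
    obtain ⟨s, hs⟩ := sub_dvd_pow_sub_pow f h n
    have : h ^ n = f ^ n - (f - h) * s := by rw [← hs]; ring
    rw [this]
    exact Ideal.sub_mem _ hf (Ideal.mul_mem_right _ _ hfh)
  have hsupp : h.support ⊆ f.support.filter (fun m => ¬ P m) := by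
    intro m hm
    rcases Finset.mem_biUnion.mp (MvPolynomial.support_sum hm) with ⟨a, ha, hma⟩
    have := MvPolynomial.support_monomial_subset hma
    rw [Finset.mem_singleton] at this
    rwa [this]
  by_cases h0 : h = 0
  · have : f = f - h := by rw [h0, sub_zero]
    rw [this]; exact hfh
  · exfalso
    have hn : n ≠ 0 := by
      rintro rfl
      have h1 : (0 : Fin 6 →₀ ℕ) ∈ ((h : MvPolynomial (Fin 6) K) ^ 0).support := by
        rw [pow_zero, MvPolynomial.mem_support_iff, MvPolynomial.coeff_zero_one]
        exact one_ne_zero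
      have := mem_Jid_iff.mp hhn 0 h1
      simp [P] at this
    have hinj : Function.Injective (toLex : (Fin 6 →₀ ℕ) → Lex (Fin 6 →₀ ℕ)) :=
      toLex.injective
    have hadd : ∀ a b : (Fin 6 →₀ ℕ), toLex (a + b) = toLex a + toLex b := fun _ _ => rfl
    obtain ⟨m0, hm0, hd⟩ :=
      exists_supDegree_mem_support (toLex : (Fin 6 →₀ ℕ) → Lex (Fin 6 →₀ ℕ)) h0
    have key : ∀ k : ℕ, h ^ k ≠ 0 ∧
        (h ^ k).supDegree toLex = k • (h.supDegree toLex) ∧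
        (h ^ k).leadingCoeff toLex = (h.leadingCoeff toLex) ^ k := by
      intro k
      induction k with
      | zero =>
        refine ⟨by rw [pow_zero]; exact one_ne_zero, ?_, ?_⟩
        · rw [pow_zero, zero_nsmul, ← MvPolynomial.C_1, supDegree_toLex_C]
        · rw [pow_zero, pow_zero, ← MvPolynomial.C_1, leadingCoeff_toLex_C]
      | succ k ih =>
        obtain ⟨ih1, ih2, ih3⟩ := ih
        have hlcne : (h ^ k).leadingCoeff toLex * h.leadingCoeff toLex ≠ 0 := by
          apply mul_ne_zero <;> rw [Ne, AddMonoidAlgebra.leadingCoeff_eq_zero hinj]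
          exacts [ih1, h0]
        refine ⟨?_, ?_, ?_⟩
        · rw [pow_succ]; exact mul_ne_zero ih1 h0
        · rw [pow_succ, AddMonoidAlgebra.supDegree_mul hinj hadd hlcne ih1 h0, ih2, succ_nsmul]
        · rw [pow_succ, AddMonoidAlgebra.leadingCoeff_mul hinj hadd, ih3, pow_succ]
    obtain ⟨hne, hdeg, hlc⟩ := key n
    have hcoeff : MvPolynomial.coeff (n • m0) (h ^ n) ≠ 0 := by
      have h1 : (h ^ n).leadingCoeff toLex =
          MvPolynomial.coeff (ofLex ((h ^ n).supDegree toLex)) (h ^ n) :=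
        MvPolynomial.leadingCoeff_toLex
      have h2 : ofLex ((h ^ n).supDegree toLex) = n • m0 := by
        rw [hdeg, hd]; rfl
      rw [h2] at h1
      rw [← h1, hlc]
      exact pow_ne_zero _ ((AddMonoidAlgebra.leadingCoeff_ne_zero hinj).mpr h0)
    have hmem : n • m0 ∈ (h ^ n).support := MvPolynomial.mem_support_iff.mpr hcoeff
    have hPm0 : P m0 := P_of_nsmul hn (mem_Jid_iff.mp hhn _ hmem)
    exact (Finset.mem_filter.mp (hsupp hm0)).2 hPm0

lemma mem_span3 {a b c p q r : MvPolynomial (Fin 6) K} :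
    p * a + q * b + r * c ∈ Ideal.span ({a, b, c} : Set (MvPolynomial (Fin 6) K)) := by
  refine Ideal.add_mem _ (Ideal.add_mem _ ?_ ?_) ?_ <;>
    exact Ideal.mul_mem_left _ _ (Ideal.subset_span (by simp))

end RadAux


open RadAux

/-- In `R = K[x₁,…,x₆]` one has
`√(x₃x₅, x₃x₆ + x₂x₄, x₄x₆ + x₂x₅) = (x₃x₅, x₃x₆, x₂x₄, x₄x₆, x₂x₅)`.
(The variables `x₁,…,x₆` are `X 0, …, X 5`.) -/
theorem radical_three_eq_span_five (K : Type*) [Field K] :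
    (Ideal.span ({X 2 * X 4, X 2 * X 5 + X 1 * X 3, X 3 * X 5 + X 1 * X 4} :
        Set (MvPolynomial (Fin 6) K))).radical =
      Ideal.span ({X 2 * X 4, X 2 * X 5, X 1 * X 3, X 3 * X 5, X 1 * X 4} :
        Set (MvPolynomial (Fin 6) K)) := by
  classical
  have hXX : ∀ i j : Fin 6, P (Finsupp.single i 1 + Finsupp.single j 1) →
      (X i * X j : MvPolynomial (Fin 6) K) ∈ Jid K := by
    intro i j hP
    rw [X_mul_X_eq]
    exact monomial_mem_Jid 1 hP
  apply le_antisymm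
  · have hIJ : Ideal.span ({X 2 * X 4, X 2 * X 5 + X 1 * X 3, X 3 * X 5 + X 1 * X 4} :
        Set (MvPolynomial (Fin 6) K)) ≤ Jid K := by
      rw [Ideal.span_le]
      intro x hx
      simp only [Set.mem_insert_iff, Set.mem_singleton_iff] at hx
      rcases hx with rfl | rfl | rfl
      · exact hXX 2 4 (by simp [P, Finsupp.single_apply])
      · exact Ideal.add_mem _ (hXX 2 5 (by simp [P, Finsupp.single_apply]))
          (hXX 1 3 (by simp [P, Finsupp.single_apply]))
      · exact Ideal.add_mem _ (hXX 3 5 (by simp [P, Finsupp.single_apply]))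
          (hXX 1 4 (by simp [P, Finsupp.single_apply]))
    intro x hx
    obtain ⟨n, hn⟩ := Ideal.mem_radical_iff.mp hx
    have hmem : x ∈ Jid K := Jid_is_radical (hIJ hn)
    rw [Jid_eq_Jspan] at hmem
    exact hmem
  · rw [Ideal.span_le]
    intro x hx
    simp only [Set.mem_insert_iff, Set.mem_singleton_iff] at hx
    set g1 : MvPolynomial (Fin 6) K := X 2 * X 4 with hg1
    set g2 : MvPolynomial (Fin 6) K := X 2 * X 5 + X 1 * X 3 with hg2
    set g3 : MvPolynomial (Fin 6) K := X 3 * X 5 + X 1 * X 4 with hg3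
    rcases hx with rfl | rfl | rfl | rfl | rfl
    · exact Ideal.le_radical (Ideal.subset_span (by simp))
    · refine Ideal.mem_radical_iff.mpr ⟨2, ?_⟩
      have : (X 2 * X 5 : MvPolynomial (Fin 6) K) ^ 2 =
          (X 1 * X 1) * g1 + (X 2 * X 5) * g2 + (-(X 1 * X 2)) * g3 := by
        rw [hg1, hg2, hg3]; ring
      rw [this]
      exact mem_span3
    · refine Ideal.mem_radical_iff.mpr ⟨2, ?_⟩
      have : (X 1 * X 3 : MvPolynomial (Fin 6) K) ^ 2 =
          (X 1 * X 1) * g1 + (X 1 * X 3) * g2 + (-(X 1 * X 2)) * g3 := by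
        rw [hg1, hg2, hg3]; ring
      rw [this]
      exact mem_span3
    · refine Ideal.mem_radical_iff.mpr ⟨2, ?_⟩
      have : (X 3 * X 5 : MvPolynomial (Fin 6) K) ^ 2 =
          (X 5 * X 5) * g1 + (-(X 4 * X 5)) * g2 + (X 3 * X 5) * g3 := by
        rw [hg1, hg2, hg3]; ring
      rw [this]
      exact mem_span3
    · refine Ideal.mem_radical_iff.mpr ⟨2, ?_⟩
      have : (X 1 * X 4 : MvPolynomial (Fin 6) K) ^ 2 =
          (X 5 * X 5) * g1 + (-(X 4 * X 5)) * g2 + (X 1 * X 4) * g3 := by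
        rw [hg1, hg2, hg3]; ring
      rw [this]
      exact mem_span3
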